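/- Let ρ be a density matrix on A ⊗ B and suppose that for every rank-one projector P on A and every rank-one projector Q on B, |Tr(ρ (P ⊗ Q)) − 1/(d_A d_B)| ≤ ε/(d_A d_B) with ε ≤ 1/3. Then for every rank-one projector P on A, the normalized conditional state σ = Tr_A(ρ(P⊗I))/Tr(ρ(P⊗I)) satisfies (1−3ε)·I/d_B ≤ σ ≤ (1+3ε)·I/d_B. -/

import Mathlib

open scoped BigOperators ComplexOrder
open Matrix

noncomputable section

namespace QIT

variable {n : Type*} [Fintype n] [DecidableEq n]

/-- Density matrix of a pure state given by a unit vector. -/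
def pureDM (φ : EuclideanSpace ℂ n) : Matrix n n ℂ :=
  Matrix.of fun i j => φ i * (starRingEnd ℂ) (φ j)

/-- A density matrix: positive semidefinite with unit trace. -/
def DensityMatrix (ρ : Matrix n n ℂ) : Prop := ρ.PosSemidef ∧ ρ.trace = 1

/-- Von Neumann entropy (base 2), via the eigenvalues. -/
def vNEntropy (ρ : Matrix n n ℂ) : ℝ :=
  if h : ρ.IsHermitian then ∑ i, -(h.eigenvalues i * Real.logb 2 (h.eigenvalues i)) else 0

/-- Trace norm of a Hermitian matrix, via eigenvalues. -/
def traceNorm (M : Matrix n n ℂ) : ℝ :=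
  if h : M.IsHermitian then ∑ i, |h.eigenvalues i| else 0

/-- Operator (spectral) norm. -/
def opNorm (M : Matrix n n ℂ) : ℝ := ‖Matrix.toEuclideanCLM (𝕜 := ℂ) M‖

/-- Apply a real function to a Hermitian matrix via the spectral theorem. -/
def hermApply (f : ℝ → ℝ) (M : Matrix n n ℂ) : Matrix n n ℂ :=
  if h : M.IsHermitian then
    (h.eigenvectorUnitary : Matrix n n ℂ) * Matrix.diagonal (fun i => (f (h.eigenvalues i) : ℂ)) *
      (h.eigenvectorUnitary : Matrix n n ℂ)ᴴ
  else 0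

/-- Matrix base-2 logarithm of a Hermitian matrix. -/
def mlog2 : Matrix n n ℂ → Matrix n n ℂ := hermApply (Real.logb 2)

/-- Matrix square root of a positive semidefinite matrix. -/
def msqrt : Matrix n n ℂ → Matrix n n ℂ := hermApply Real.sqrt

/-- Quantum relative entropy `D(ρ‖σ) = Tr ρ (log₂ ρ − log₂ σ)`. -/
def relEnt (ρ σ : Matrix n n ℂ) : ℝ := ((ρ * (mlog2 ρ - mlog2 σ)).trace).re

/-- Uhlmann fidelity `F(ρ,σ) = (Tr √(√ρ σ √ρ))²`. -/
def fidelity (ρ σ : Matrix n n ℂ) : ℝ := (((msqrt (msqrt ρ * σ * msqrt ρ)).trace).re) ^ 2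

/-- A projector. -/
def Projector (P : Matrix n n ℂ) : Prop := P.IsHermitian ∧ P * P = P

variable {dA dB : ℕ}

/-- Partial trace over the second factor. -/
def ptraceB (ρ : Matrix (Fin dA × Fin dB) (Fin dA × Fin dB) ℂ) : Matrix (Fin dA) (Fin dA) ℂ :=
  Matrix.of fun a a' => ∑ b, ρ (a, b) (a', b)

/-- Partial trace over the first factor. -/
def ptraceA (ρ : Matrix (Fin dA × Fin dB) (Fin dA × Fin dB) ℂ) : Matrix (Fin dB) (Fin dB) ℂ :=
  Matrix.of fun b b' => ∑ a, ρ (a, b) (a, b')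

/-- Kronecker (tensor) product of operators on the two factors. -/
def kron (P : Matrix (Fin dA) (Fin dA) ℂ) (Q : Matrix (Fin dB) (Fin dB) ℂ) :
    Matrix (Fin dA × Fin dB) (Fin dA × Fin dB) ℂ :=
  Matrix.of fun x y => P x.1 y.1 * Q x.2 y.2

/-- Partial transpose on the second factor. -/
def ptransposeB (ρ : Matrix (Fin dA × Fin dB) (Fin dA × Fin dB) ℂ) :
    Matrix (Fin dA × Fin dB) (Fin dA × Fin dB) ℂ :=
  Matrix.of fun x y => ρ (x.1, y.2) (y.1, x.2)

/-- Bipartite separability. -/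
def Separable (ρ : Matrix (Fin dA × Fin dB) (Fin dA × Fin dB) ℂ) : Prop :=
  ∃ (m : ℕ) (p : Fin m → ℝ) (a : Fin m → Matrix (Fin dA) (Fin dA) ℂ)
    (b : Fin m → Matrix (Fin dB) (Fin dB) ℂ),
    (∀ l, 0 ≤ p l) ∧ (∑ l, p l = 1) ∧
    (∀ l, (a l).PosSemidef ∧ (a l).trace = 1) ∧
    (∀ l, (b l).PosSemidef ∧ (b l).trace = 1) ∧
    ρ = ∑ l, (p l : ℂ) • kron (a l) (b l)

/-- Entanglement of formation. -/
def EoF (ρ : Matrix (Fin dA × Fin dB) (Fin dA × Fin dB) ℂ) : ℝ :=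
  sInf { x : ℝ | ∃ (m : ℕ) (p : Fin m → ℝ) (φ : Fin m → EuclideanSpace ℂ (Fin dA × Fin dB)),
    (∀ l, 0 ≤ p l) ∧ (∑ l, p l = 1) ∧ (∀ l, ‖φ l‖ = 1) ∧
    (ρ = ∑ l, (p l : ℂ) • pureDM (φ l)) ∧
    x = ∑ l, p l * vNEntropy (ptraceB (pureDM (φ l))) }

end QIT

namespace Helper

variable {n : Type*} [Fintype n] [DecidableEq n]

omit [DecidableEq n] in
lemma sum_conj_mul_self (ψ : EuclideanSpace ℂ n) :
    ∑ k, (starRingEnd ℂ) (ψ k) * ψ k = ((‖ψ‖ ^ 2 : ℝ) : ℂ) := by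
  have := inner_self_eq_norm_sq_to_K (𝕜 := ℂ) ψ
  rw [PiLp.inner_apply] at this
  simpa [RCLike.inner_apply, Complex.conj_mul'] using this

lemma pureDM_projector (ψ : EuclideanSpace ℂ n) (hψ : ‖ψ‖ = 1) :
    QIT.Projector (QIT.pureDM ψ) := by
  constructor
  · ext i j
    simp [QIT.pureDM, Matrix.conjTranspose_apply, mul_comm]
  · ext i j
    simp only [Matrix.mul_apply, QIT.pureDM, Matrix.of_apply]
    calc ∑ k, ψ i * (starRingEnd ℂ) (ψ k) * (ψ k * (starRingEnd ℂ) (ψ j))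
        = (ψ i * (starRingEnd ℂ) (ψ j)) * ∑ k, (starRingEnd ℂ) (ψ k) * ψ k := by
          rw [Finset.mul_sum]; exact Finset.sum_congr rfl fun k _ => by ring
      _ = _ := by rw [sum_conj_mul_self, hψ]; norm_num

lemma pureDM_rank_one (ψ : EuclideanSpace ℂ n) (hψ : ψ ≠ 0) :
    (QIT.pureDM ψ).rank = 1 := by
  have hfac : QIT.pureDM ψ
      = Matrix.replicateCol Unit (WithLp.ofLp ψ) * Matrix.replicateRow Unit (fun j => (starRingEnd ℂ) (ψ j)) := by
    ext i j
    simp [QIT.pureDM, Matrix.mul_apply]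
  have h1 : (QIT.pureDM ψ).rank ≤ 1 := by
    rw [hfac]
    exact (Matrix.rank_mul_le_left _ _).trans ((Matrix.rank_le_card_width _).trans (by simp))
  have hnorm : ‖ψ‖ ≠ 0 := norm_ne_zero_iff.mpr hψ
  have h0 : (QIT.pureDM ψ).rank ≠ 0 := by
    intro h0
    have := finrank_zero_iff_forall_zero.mp h0
      ⟨(QIT.pureDM ψ).mulVecLin (WithLp.ofLp ψ), LinearMap.mem_range_self _ (WithLp.ofLp ψ)⟩
    have hval : (QIT.pureDM ψ) *ᵥ (WithLp.ofLp ψ) = 0 := by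
      simpa [Matrix.mulVecLin_apply, Subtype.ext_iff] using this
    have hcomp : ((QIT.pureDM ψ) *ᵥ (WithLp.ofLp ψ)) = fun i => ψ i * ((‖ψ‖ ^ 2 : ℝ) : ℂ) := by
      funext i
      simp only [Matrix.mulVec, dotProduct, QIT.pureDM, Matrix.of_apply]
      rw [show ∑ j, ψ i * (starRingEnd ℂ) (ψ j) * ψ j
          = ψ i * ∑ j, (starRingEnd ℂ) (ψ j) * ψ j by
        rw [Finset.mul_sum]; exact Finset.sum_congr rfl fun k _ => by ring,
        sum_conj_mul_self]
    rw [hcomp] at hval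
    apply hψ
    ext i
    have := congrFun hval i
    simp only [Pi.zero_apply, mul_eq_zero] at this
    rcases this with h | h
    · exact h
    · exact absurd (by exact_mod_cast h) (pow_ne_zero 2 hnorm)
  omega

lemma sum_rotate {α β γ : Type*} [Fintype α] [Fintype β] [Fintype γ] {M : Type*} [AddCommMonoid M]
    (g : α → β → γ → M) :
    ∑ a, ∑ b, ∑ c, g a b c = ∑ c, ∑ a, ∑ b, g a b c :=
  (Finset.sum_congr rfl fun _ _ => Finset.sum_comm).trans Finset.sum_comm

omit [DecidableEq n] in
lemma quadform_eq_trace (M : Matrix n n ℂ) (v : n → ℂ) :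
    star v ⬝ᵥ M *ᵥ v = (M * QIT.pureDM (WithLp.toLp 2 v)).trace := by
  simp only [dotProduct, Matrix.mulVec, Pi.star_apply, PiLp.toLp_apply, Matrix.trace, Matrix.diag_apply,
    Matrix.mul_apply, QIT.pureDM, Matrix.of_apply, Finset.mul_sum, Finset.sum_mul]
  exact Finset.sum_congr rfl fun i _ => Finset.sum_congr rfl fun j _ => by
    simp only [RCLike.star_def]; ring

lemma one_eq_sum_pureDM :
    (1 : Matrix n n ℂ) = ∑ b, QIT.pureDM (EuclideanSpace.single b (1:ℂ)) := by
  ext i j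
  simp only [Matrix.sum_apply, QIT.pureDM, Matrix.of_apply, EuclideanSpace.single_apply]
  by_cases h : i = j
  · subst h; simp [Finset.sum_ite_eq]
  · simp only [Matrix.one_apply_ne h]
    rw [Finset.sum_eq_zero]
    intro b _
    by_cases hi : i = b <;> by_cases hj : j = b <;> simp_all

omit [Fintype n] [DecidableEq n] in
lemma pureDM_smul (c : ℂ) (ψ : EuclideanSpace ℂ n) :
    QIT.pureDM (c • ψ) = (c * (starRingEnd ℂ) c) • QIT.pureDM ψ := by
  ext i j
  simp [QIT.pureDM, PiLp.smul_apply, smul_eq_mul]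
  ring

omit [Fintype n] in
lemma smul_herm (r : ℝ) {A : Matrix n n ℂ} (hA : A.IsHermitian) :
    (((r : ℝ) : ℂ) • A).IsHermitian := by
  have : (((r : ℝ) : ℂ) • A)ᴴ = ((r : ℝ) : ℂ) • A := by
    rw [Matrix.conjTranspose_smul, hA.eq, RCLike.star_def, Complex.conj_ofReal]
  exact this

omit [DecidableEq n] in
lemma star_quadform {M : Matrix n n ℂ} (hM : M.IsHermitian) (x : n → ℂ) :
    star (star x ⬝ᵥ M *ᵥ x) = star x ⬝ᵥ M *ᵥ x := by
  rw [← Matrix.star_dotProduct, Matrix.star_mulVec, ← Matrix.dotProduct_mulVec, hM.eq]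

variable {dA dB : ℕ}

lemma trace_mul_kron (ρ : Matrix (Fin dA × Fin dB) (Fin dA × Fin dB) ℂ)
    (P : Matrix (Fin dA) (Fin dA) ℂ) (Q : Matrix (Fin dB) (Fin dB) ℂ) :
    (ρ * QIT.kron P Q).trace
      = ∑ b, ∑ d, ∑ a, ∑ c, ρ (a,b) (c,d) * (P c a * Q d b) := by
  simp only [Matrix.trace, Matrix.diag_apply, Matrix.mul_apply, QIT.kron, Matrix.of_apply,
    Fintype.sum_prod_type]
  rw [Finset.sum_comm]
  exact Finset.sum_congr rfl fun b _ => Helper.sum_rotate _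

lemma trace_ptraceA_mul (ρ : Matrix (Fin dA × Fin dB) (Fin dA × Fin dB) ℂ)
    (P : Matrix (Fin dA) (Fin dA) ℂ) (Q : Matrix (Fin dB) (Fin dB) ℂ) :
    (QIT.ptraceA (ρ * QIT.kron P 1) * Q).trace = (ρ * QIT.kron P Q).trace := by
  rw [trace_mul_kron]
  simp only [Matrix.trace, Matrix.diag_apply, Matrix.mul_apply, QIT.ptraceA, QIT.kron,
    Matrix.of_apply, Fintype.sum_prod_type, Matrix.one_apply, mul_ite, mul_one, mul_zero,
    ite_mul, zero_mul, Finset.sum_ite_eq, Finset.sum_ite_eq', Finset.mem_univ, if_true,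
    Finset.sum_mul]
  exact Finset.sum_congr rfl fun b _ => Finset.sum_congr rfl fun d _ =>
    Finset.sum_congr rfl fun a _ => Finset.sum_congr rfl fun c _ => by ring

lemma kron_smul (P : Matrix (Fin dA) (Fin dA) ℂ) (c : ℂ) (Q : Matrix (Fin dB) (Fin dB) ℂ) :
    QIT.kron P (c • Q) = c • QIT.kron P Q := by
  ext x y
  simp [QIT.kron]
  ring

lemma kron_sum (P : Matrix (Fin dA) (Fin dA) ℂ) {ι : Type*} (s : Finset ι)
    (f : ι → Matrix (Fin dB) (Fin dB) ℂ) :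
    QIT.kron P (∑ b ∈ s, f b) = ∑ b ∈ s, QIT.kron P (f b) := by
  ext x y
  simp [QIT.kron, Matrix.sum_apply, Finset.mul_sum]

lemma ptraceA_hermitian (ρ : Matrix (Fin dA × Fin dB) (Fin dA × Fin dB) ℂ)
    (hρ : ρ.IsHermitian) (P : Matrix (Fin dA) (Fin dA) ℂ) (hP : P.IsHermitian) :
    (QIT.ptraceA (ρ * QIT.kron P 1)).IsHermitian := by
  apply Matrix.IsHermitian.ext
  intro b b'
  simp only [QIT.ptraceA, Matrix.of_apply, Matrix.mul_apply, QIT.kron, Fintype.sum_prod_type,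
    Matrix.one_apply, mul_ite, mul_one, mul_zero, ite_mul, zero_mul,
    Finset.sum_ite_eq, Finset.sum_ite_eq', Finset.mem_univ, if_true, star_sum, star_mul']
  rw [Finset.sum_comm]
  refine Finset.sum_congr rfl fun c _ => Finset.sum_congr rfl fun a _ => ?_
  rw [hρ.apply, hP.apply]

end Helper
namespace Helper

variable {n : Type*} [Fintype n] [DecidableEq n]

lemma quadform_sub_smul (c₁ c₂ : ℝ) (A : Matrix n n ℂ) (x : n → ℂ) :
    star x ⬝ᵥ (((c₁ : ℝ) : ℂ) • A - ((c₂ : ℝ) : ℂ) • 1) *ᵥ x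
      = ((c₁ : ℝ) : ℂ) * (star x ⬝ᵥ A *ᵥ x) - ((c₂ : ℝ) : ℂ) * (star x ⬝ᵥ x) := by
  rw [Matrix.sub_mulVec, dotProduct_sub, Matrix.smul_mulVec,
    Matrix.smul_mulVec, dotProduct_smul, dotProduct_smul,
    Matrix.one_mulVec, smul_eq_mul, smul_eq_mul]

lemma quadform_smul_sub (c₁ c₂ : ℝ) (A : Matrix n n ℂ) (x : n → ℂ) :
    star x ⬝ᵥ (((c₂ : ℝ) : ℂ) • 1 - ((c₁ : ℝ) : ℂ) • A) *ᵥ x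
      = ((c₂ : ℝ) : ℂ) * (star x ⬝ᵥ x) - ((c₁ : ℝ) : ℂ) * (star x ⬝ᵥ A *ᵥ x) := by
  rw [Matrix.sub_mulVec, dotProduct_sub, Matrix.smul_mulVec,
    Matrix.smul_mulVec, dotProduct_smul, dotProduct_smul,
    Matrix.one_mulVec, smul_eq_mul, smul_eq_mul]

omit [DecidableEq n] in
lemma star_dot_self (x : n → ℂ) :
    star x ⬝ᵥ x = (((∑ i, Complex.normSq (x i) : ℝ)) : ℂ) := by
  push_cast
  simp only [dotProduct, Pi.star_apply, RCLike.star_def]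
  exact Finset.sum_congr rfl fun i _ => by
    rw [mul_comm, Complex.mul_conj]

end Helper
theorem post_measurement_near_maximally_mixed (dA dB : ℕ) (hA : 0 < dA) (hB : 0 < dB)
    (ρ : Matrix (Fin dA × Fin dB) (Fin dA × Fin dB) ℂ) (hρ : QIT.DensityMatrix ρ)
    (ε : ℝ) (hε0 : 0 ≤ ε) (hε : ε ≤ 1 / 3)
    (h : ∀ (P : Matrix (Fin dA) (Fin dA) ℂ) (Q : Matrix (Fin dB) (Fin dB) ℂ),
      QIT.Projector P → P.rank = 1 → QIT.Projector Q → Q.rank = 1 →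
      |((ρ * QIT.kron P Q).trace).re - 1 / ((dA : ℝ) * dB)| ≤ ε / ((dA : ℝ) * dB)) :
    ∀ P : Matrix (Fin dA) (Fin dA) ℂ, QIT.Projector P → P.rank = 1 →
      (((1 / ((ρ * QIT.kron P 1).trace).re : ℝ) : ℂ) • QIT.ptraceA (ρ * QIT.kron P 1)
          - (((1 - 3 * ε) / (dB : ℝ) : ℝ) : ℂ) • 1).PosSemidef ∧
      ((((1 + 3 * ε) / (dB : ℝ) : ℝ) : ℂ) • 1
          - ((1 / ((ρ * QIT.kron P 1).trace).re : ℝ) : ℂ) •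
              QIT.ptraceA (ρ * QIT.kron P 1)).PosSemidef := by
  intro P hP hPrank
  have hdA : (0:ℝ) < dA := by exact_mod_cast hA
  have hdB : (0:ℝ) < dB := by exact_mod_cast hB
  have hDD : (0:ℝ) < (dA:ℝ) * dB := mul_pos hdA hdB
  have hρH : ρ.IsHermitian := hρ.1.1
  set M : Matrix (Fin dB) (Fin dB) ℂ := QIT.ptraceA (ρ * QIT.kron P 1) with hMdef
  have hMH : M.IsHermitian := Helper.ptraceA_hermitian ρ hρH P hP.1
  set t : ℝ := ((ρ * QIT.kron P 1).trace).re with htdef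
  -- the basic bound for unit vectors
  have hq : ∀ ψ : EuclideanSpace ℂ (Fin dB), ‖ψ‖ = 1 →
      1 - ε ≤ (dA:ℝ) * dB * ((ρ * QIT.kron P (QIT.pureDM ψ)).trace).re ∧
      (dA:ℝ) * dB * ((ρ * QIT.kron P (QIT.pureDM ψ)).trace).re ≤ 1 + ε := by
    intro ψ hψ
    have hproj := Helper.pureDM_projector ψ hψ
    have hrank := Helper.pureDM_rank_one ψ (by
      intro h0; rw [h0] at hψ; simp at hψ)
    have habs := h P _ hP hPrank hproj hrank
    set q : ℝ := ((ρ * QIT.kron P (QIT.pureDM ψ)).trace).re with hqdef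
    have h2 : (dA:ℝ)*dB*q - 1 = ((dA:ℝ)*dB) * (q - 1/((dA:ℝ)*dB)) := by
      field_simp
    have h3 : |(dA:ℝ)*dB*q - 1| ≤ ε := by
      rw [h2, abs_mul, abs_of_pos hDD]
      calc (dA:ℝ)*dB * |q - 1/((dA:ℝ)*dB)| ≤ (dA:ℝ)*dB * (ε/((dA:ℝ)*dB)) :=
            mul_le_mul_of_nonneg_left habs hDD.le
        _ = ε := by field_simp
    have h4 := abs_le.mp h3
    constructor <;> linarith [h4.1, h4.2]
  -- trace of ρ (P ⊗ 1) as a sum over a basis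
  have htsum : t = ∑ b, ((ρ * QIT.kron P (QIT.pureDM (EuclideanSpace.single b (1:ℂ)))).trace).re := by
    rw [htdef, show (1 : Matrix (Fin dB) (Fin dB) ℂ)
        = ∑ b, QIT.pureDM (EuclideanSpace.single b (1:ℂ)) from Helper.one_eq_sum_pureDM,
      Helper.kron_sum, Finset.mul_sum, Matrix.trace_sum, Complex.re_sum]
  -- bounds on t
  have htb : 1 - ε ≤ (dA:ℝ) * t ∧ (dA:ℝ) * t ≤ 1 + ε := by
    have hunit : ∀ b : Fin dB, ‖EuclideanSpace.single b (1:ℂ)‖ = 1 := by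
      intro b; rw [EuclideanSpace.norm_single]; simp
    have hlb : (dB:ℝ) * (1 - ε) ≤ ∑ b, (dA:ℝ)*dB*((ρ * QIT.kron P (QIT.pureDM (EuclideanSpace.single b (1:ℂ)))).trace).re := by
      calc (dB:ℝ) * (1 - ε) = ∑ _b : Fin dB, (1 - ε) := by
            rw [Finset.sum_const, Finset.card_univ, Fintype.card_fin, nsmul_eq_mul]
        _ ≤ _ := Finset.sum_le_sum fun b _ => (hq _ (hunit b)).1
    have hub : (∑ b, (dA:ℝ)*dB*((ρ * QIT.kron P (QIT.pureDM (EuclideanSpace.single b (1:ℂ)))).trace).re) ≤ (dB:ℝ) * (1 + ε) := by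
      calc _ ≤ ∑ _b : Fin dB, (1 + ε) := Finset.sum_le_sum fun b _ => (hq _ (hunit b)).2
        _ = (dB:ℝ) * (1 + ε) := by
            rw [Finset.sum_const, Finset.card_univ, Fintype.card_fin, nsmul_eq_mul]
    have hsum_eq : (∑ b, (dA:ℝ)*dB*((ρ * QIT.kron P (QIT.pureDM (EuclideanSpace.single b (1:ℂ)))).trace).re)
        = (dB:ℝ) * ((dA:ℝ) * t) := by
      rw [htsum, Finset.mul_sum, Finset.mul_sum]
      exact Finset.sum_congr rfl fun b _ => by ring
    rw [hsum_eq] at hlb hub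
    exact ⟨le_of_mul_le_mul_left hlb hdB, le_of_mul_le_mul_left hub hdB⟩
  have ht_pos : 0 < t := by nlinarith [htb.1]
  -- quadratic form of M
  have key : ∀ x : Fin dB → ℂ, star x ⬝ᵥ M *ᵥ x
      = (ρ * QIT.kron P (QIT.pureDM (WithLp.toLp 2 x))).trace :=
    fun x => (Helper.quadform_eq_trace M x).trans (Helper.trace_ptraceA_mul ρ P _)
  -- bounds for arbitrary vectors
  have hTbound : ∀ x : Fin dB → ℂ,
      (1 - ε) * (∑ i, Complex.normSq (x i)) ≤ (dA:ℝ) * dB * ((star x ⬝ᵥ M *ᵥ x).re) ∧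
      (dA:ℝ) * dB * ((star x ⬝ᵥ M *ᵥ x).re) ≤ (1 + ε) * (∑ i, Complex.normSq (x i)) := by
    intro x
    by_cases hx : x = (0 : Fin dB → ℂ)
    · subst hx
      simp [dotProduct]
    · set S : ℝ := ∑ i, Complex.normSq (x i) with hSdef
      have hS0 : 0 < S := by
        have hex : ∃ i, x i ≠ 0 := by
          by_contra hc; push_neg at hc; exact hx (funext hc)
        obtain ⟨i, hi⟩ := hex
        exact Finset.sum_pos' (fun j _ => Complex.normSq_nonneg _)
          ⟨i, Finset.mem_univ i, Complex.normSq_pos.mpr hi⟩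
      set r : ℝ := Real.sqrt S with hrdef
      have hr0 : 0 < r := Real.sqrt_pos.mpr hS0
      have hr2 : r^2 = S := Real.sq_sqrt hS0.le
      set u : EuclideanSpace ℂ (Fin dB) := ((r⁻¹ : ℝ) : ℂ) • (WithLp.toLp 2 x)
        with hudef
      have hui : ∀ i, u i = ((r⁻¹ : ℝ) : ℂ) * x i := fun i => rfl
      have hu : ‖u‖ = 1 := by
        rw [EuclideanSpace.norm_eq]
        have hsq : ∀ i, ‖u i‖^2 = r⁻¹^2 * Complex.normSq (x i) := by
          intro i
          rw [hui i, norm_mul, mul_pow, Complex.norm_real, Real.norm_eq_abs, sq_abs,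
            Complex.sq_norm]
        rw [Finset.sum_congr rfl fun i _ => hsq i, ← Finset.mul_sum, ← hSdef,
          inv_pow, hr2, inv_mul_cancel₀ hS0.ne', Real.sqrt_one]
      have hxu : (WithLp.toLp 2 x) = ((r : ℝ) : ℂ) • u := by
        rw [hudef, smul_smul, show ((r:ℝ):ℂ) * ((r⁻¹:ℝ):ℂ) = 1 by
          push_cast
          field_simp, one_smul]
      have hdm : QIT.pureDM (WithLp.toLp 2 x) = ((S : ℝ) : ℂ) • QIT.pureDM u := by
        rw [show QIT.pureDM (WithLp.toLp 2 x) = QIT.pureDM (((r:ℝ):ℂ) • u) by rw [← hxu],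
          Helper.pureDM_smul]
        congr 1
        rw [Complex.conj_ofReal, ← Complex.ofReal_mul, ← sq, hr2]
      have htr : (star x ⬝ᵥ M *ᵥ x).re
          = S * ((ρ * QIT.kron P (QIT.pureDM u)).trace).re := by
        rw [key, hdm, Helper.kron_smul, Matrix.mul_smul, Matrix.trace_smul, smul_eq_mul,
          Complex.re_ofReal_mul]
      have hb := hq u hu
      constructor
      · rw [htr]; nlinarith [hb.1, hS0.le]
      · rw [htr]; nlinarith [hb.2, hS0.le]
  -- reality of the quadratic form
  have hreal : ∀ x : Fin dB → ℂ, star x ⬝ᵥ M *ᵥ x = (((star x ⬝ᵥ M *ᵥ x).re : ℝ) : ℂ) :=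
    fun x => (Complex.conj_eq_iff_re.mp (Helper.star_quadform hMH x)).symm
  have h13 : (0:ℝ) ≤ 1 - 3*ε := by linarith
  constructor
  · refine Matrix.posSemidef_iff_dotProduct_mulVec.mpr ⟨(Helper.smul_herm (1/t) hMH).sub (Helper.smul_herm ((1-3*ε)/dB) Matrix.isHermitian_one), ?_⟩
    intro x
    rw [Helper.quadform_sub_smul, Helper.star_dot_self, hreal x]
    set R : ℝ := (star x ⬝ᵥ M *ᵥ x).re with hRdef
    set N : ℝ := ∑ i, Complex.normSq (x i) with hNdef
    rw [show ((1/t : ℝ):ℂ) * ((R:ℝ):ℂ) - (((1-3*ε)/dB : ℝ):ℂ) * ((N:ℝ):ℂ)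
        = (((1/t)*R - ((1-3*ε)/dB)*N : ℝ) : ℂ) by push_cast; ring]
    rw [Complex.zero_le_real]
    have hRb := hTbound x
    rw [← hRdef, ← hNdef] at hRb
    have hN0 : (0:ℝ) ≤ N := Finset.sum_nonneg fun i _ => Complex.normSq_nonneg _
    have step : (1-3*ε) * N * t ≤ R * dB := by
      nlinarith [hRb.1, htb.2, mul_nonneg (mul_nonneg h13 hN0) ht_pos.le,
        mul_nonneg hN0 hε0, mul_nonneg (mul_nonneg hN0 hε0) hε0]
    have hdiv : (1-3*ε)/dB * N ≤ R / t := by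
      rw [div_mul_eq_mul_div, div_le_div_iff₀ hdB ht_pos]
      linarith
    have hRt : (1/t) * R = R / t := by ring
    linarith
  · refine Matrix.posSemidef_iff_dotProduct_mulVec.mpr ⟨(Helper.smul_herm ((1+3*ε)/dB) Matrix.isHermitian_one).sub (Helper.smul_herm (1/t) hMH), ?_⟩
    intro x
    rw [Helper.quadform_smul_sub, Helper.star_dot_self, hreal x]
    set R : ℝ := (star x ⬝ᵥ M *ᵥ x).re with hRdef
    set N : ℝ := ∑ i, Complex.normSq (x i) with hNdef
    rw [show (((1+3*ε)/dB : ℝ):ℂ) * ((N:ℝ):ℂ) - ((1/t : ℝ):ℂ) * ((R:ℝ):ℂ)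
        = ((((1+3*ε)/dB)*N - (1/t)*R : ℝ) : ℂ) by push_cast; ring]
    rw [Complex.zero_le_real]
    have hRb := hTbound x
    rw [← hRdef, ← hNdef] at hRb
    have hN0 : (0:ℝ) ≤ N := Finset.sum_nonneg fun i _ => Complex.normSq_nonneg _
    have step : R * dB ≤ (1+3*ε) * N * t := by
      nlinarith [hRb.2, htb.1, mul_nonneg hN0 hε0, mul_nonneg (mul_nonneg hN0 hε0) hε0,
        mul_nonneg hN0 ht_pos.le]
    have hdiv : R / t ≤ (1+3*ε)/dB * N := by
      rw [div_mul_eq_mul_div, div_le_div_iff₀ ht_pos hdB]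
      linarith
    have hRt : (1/t) * R = R / t := by ring
    linarith

end
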